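/- Let M be a finite group and K₁, …, K_ℓ subgroups such that for every i, K_i · (⋂_{j ≠ i} K_j) = M. Then for any subset I of {1,…,ℓ}, the index |M : ⋂_{i ∈ I} K_i| equals ∏_{i ∈ I} |M : K_i|. -/

import Mathlib

open Pointwise

lemma aux_relindex_eq_index {M : Type*} [Group M] (H K : Subgroup M)
    (h : (H : Set M) * (K : Set M) = Set.univ) : H.relIndex K = H.index := by
  refine Nat.card_eq_of_bijective
    (Quotient.map' (Subtype.val : K → M) (fun a b hab => by
      rw [QuotientGroup.leftRel_apply] at hab ⊢
      exact hab)) ⟨?_, ?_⟩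
  · rintro ⟨a⟩ ⟨b⟩ hab
    have : ((a : M) : M ⧸ H) = ((b : M) : M ⧸ H) := hab
    rw [QuotientGroup.eq] at this
    exact Quotient.sound' (QuotientGroup.leftRel_apply.mpr this)
  · rintro ⟨g⟩
    have hg : g⁻¹ ∈ (H : Set M) * (K : Set M) := by rw [h]; trivial
    obtain ⟨x, hx, y, hy, hxy⟩ := hg
    refine ⟨QuotientGroup.mk ⟨y⁻¹, K.inv_mem hy⟩, ?_⟩
    show ((y⁻¹ : M) : M ⧸ H) = ↑g
    rw [QuotientGroup.eq]
    have hg' : g = y⁻¹ * x⁻¹ := by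
      have h2 : x * y = g⁻¹ := hxy
      rw [← mul_inv_rev, h2, inv_inv]
    have : y * g = x⁻¹ := by rw [hg']; group
    simpa [this] using H.inv_mem hx

lemma aux_index_inf {M : Type*} [Group M] (H K : Subgroup M)
    (h : (H : Set M) * (K : Set M) = Set.univ) :
    (H ⊓ K).index = H.index * K.index := by
  have := Subgroup.relIndex_inf_mul_relIndex H K ⊤
  rw [inf_top_eq, Subgroup.relIndex_top_right, Subgroup.relIndex_top_right,
    aux_relindex_eq_index H K h] at this
  exact this.symm

/-- In a Cartesian system of a finite group, `|M : K_I| = ∏_{i ∈ I} |M : K_i|`. -/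
theorem stmt_5 {M : Type*} [Group M] [Finite M] {ℓ : ℕ} (K : Fin ℓ → Subgroup M)
    (hcs : ∀ i, (K i : Set M) * ((⨅ j ∈ {j : Fin ℓ | j ≠ i}, K j : Subgroup M) : Set M)
      = Set.univ) :
    ∀ I : Finset (Fin ℓ),
      (⨅ i ∈ I, K i : Subgroup M).index = ∏ i ∈ I, (K i).index := by
  intro I
  induction I using Finset.induction_on with
  | empty => simp
  | @insert i I hi ih =>
    rw [Finset.iInf_insert, Finset.prod_insert hi, ← ih]
    apply aux_index_inf
    apply Set.eq_univ_of_univ_subset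
    rw [← hcs i]
    apply Set.mul_subset_mul_left
    have hle : (⨅ j ∈ {j : Fin ℓ | j ≠ i}, K j : Subgroup M) ≤ ⨅ j ∈ I, K j := by
      refine le_iInf₂ fun j hj => ?_
      exact iInf₂_le j (by rintro rfl; exact hi hj)
    exact hle
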